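/- Let G be a primitive permutation group of finite degree n containing a cycle that fixes exactly k points (so the cycle has length n − k ≥ 2). Then G is (k+1)-transitive on the n points. -/

import Mathlib

/-- `G` acts preprimitively on `α`: the action is pretransitive and every block is trivial. -/
def IsPreprimitive (G : Type*) (α : Type*) [Group G] [MulAction G α] : Prop :=
  MulAction.IsPretransitive G α ∧
    ∀ B : Set α, MulAction.IsBlock G B → MulAction.IsTrivialBlock B

/-- `G` acts `n`-fold pretransitively on `α`: the induced action on embeddings of `Fin n`
into `α` (i.e. on ordered `n`-tuples of distinct elements) is pretransitive. -/
def IsMultiplyPretransitive (G : Type*) (α : Type*) [Group G] [MulAction G α] (n : ℕ) : Prop :=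
  MulAction.IsPretransitive G (Fin n ↪ α)


set_option linter.unusedSectionVars false
set_option maxHeartbeats 1000000

open Equiv Equiv.Perm Finset MulAction Pointwise

section Prelim
variable {Ω : Type*} [Fintype Ω] [DecidableEq Ω]

lemma mem_image_perm {σ : Perm Ω} {Δ : Finset Ω} {x : Ω} :
    x ∈ Δ.image ⇑σ ↔ σ⁻¹ x ∈ Δ := by
  simp only [Finset.mem_image]
  constructor
  · rintro ⟨y, hy, rfl⟩; simpa using hy
  · intro h; exact ⟨σ⁻¹ x, h, by simp⟩

lemma image_perm_compl {σ : Perm Ω} {Δ : Finset Ω} :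
    Δᶜ.image ⇑σ = (Δ.image ⇑σ)ᶜ := by
  ext x
  rw [mem_image_perm, Finset.mem_compl, Finset.mem_compl, mem_image_perm]

lemma image_perm_card {σ : Perm Ω} {Δ : Finset Ω} :
    (Δ.image ⇑σ).card = Δ.card :=
  Finset.card_image_of_injective _ σ.injective

lemma image_perm_mul {σ τ : Perm Ω} {Δ : Finset Ω} :
    (Δ.image ⇑σ).image ⇑τ = Δ.image ⇑(τ * σ) := by
  rw [Finset.image_image]; rfl

end Prelim

section J2
variable {Ω : Type*} [Fintype Ω] [DecidableEq Ω] (G : Subgroup (Perm Ω))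

/-- pair (2-fold) transitivity, concrete form -/
def TwoTrans : Prop :=
  ∀ x y x' y' : Ω, x ≠ y → x' ≠ y' → ∃ σ ∈ G, σ x = x' ∧ σ y = y'

variable {G}

/-- From primitivity: a non-trivial finset is moved non-trivially by some element. -/
lemma exists_mover (hbl : ∀ B : Set Ω, IsBlock G B → IsTrivialBlock B)
    (Δ : Finset Ω) (h2 : 2 ≤ Δ.card) (hlt : Δ.card < Fintype.card Ω) :
    ∃ σ ∈ G, Δ.image ⇑σ ≠ Δ ∧ (Δ.image ⇑σ ∩ Δ).Nonempty := by
  by_contra hcon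
  push_neg at hcon
  -- so Δ is a block
  have smul_eq : ∀ (g : G), (g • (↑Δ : Set Ω)) = ↑(Δ.image ⇑(g : Perm Ω)) := by
    intro g
    ext x
    rw [Set.mem_smul_set]
    simp only [Finset.coe_image, Set.mem_image, Finset.mem_coe]
    rfl
  have hblock : IsBlock G (↑Δ : Set Ω) := by
    intro g₁ g₂ hne
    have key := hcon ((g₂⁻¹ * g₁ : G) : Perm Ω) (g₂⁻¹ * g₁ : G).2
    rcases Classical.em ((Δ.image ⇑((g₂⁻¹ * g₁ : G) : Perm Ω)) = Δ) with h | h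
    · exfalso
      apply hne
      have heq : ((g₂⁻¹ * g₁ : G) • (↑Δ : Set Ω)) = ↑Δ := by
        rw [smul_eq, h]
      calc g₁ • (↑Δ : Set Ω) = g₂ • ((g₂⁻¹ * g₁ : G) • (↑Δ : Set Ω)) := by
            rw [smul_smul]; congr 1; group
        _ = g₂ • (↑Δ : Set Ω) := by rw [heq]
    · have hdisj := key h
      rw [Set.disjoint_left]
      intro x hx1 hx2
      rw [smul_eq] at hx1 hx2
      have hmem1 : ((g₂⁻¹ * g₁ : G) : Perm Ω) ((g₁ : Perm Ω)⁻¹ x) ∈ Δ.image ⇑((g₂⁻¹ * g₁ : G) : Perm Ω) := by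
        apply Finset.mem_image_of_mem
        rw [Finset.mem_coe, mem_image_perm] at hx1
        exact hx1
      have hmem2 : ((g₂⁻¹ * g₁ : G) : Perm Ω) ((g₁ : Perm Ω)⁻¹ x) ∈ Δ := by
        have hrw : ((g₂⁻¹ * g₁ : G) : Perm Ω) ((g₁ : Perm Ω)⁻¹ x) = (g₂ : Perm Ω)⁻¹ x := by
          simp [Subgroup.coe_mul, Equiv.Perm.mul_apply]
        rw [hrw]
        rw [Finset.mem_coe, mem_image_perm] at hx2
        exact hx2
      have : ((g₂⁻¹ * g₁ : G) : Perm Ω) ((g₁ : Perm Ω)⁻¹ x) ∈ (Δ.image ⇑((g₂⁻¹ * g₁ : G) : Perm Ω) ∩ Δ : Finset Ω) :=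
        Finset.mem_inter.2 ⟨hmem1, hmem2⟩
      rw [hdisj] at this
      exact absurd this (Finset.notMem_empty _)
  have htriv := hbl _ hblock
  rcases htriv with h | h
  · obtain ⟨x, hx, y, hy, hxy⟩ := Finset.one_lt_card.mp h2
    exact hxy (h hx hy)
  · have : Δ = Finset.univ := by
      apply Finset.coe_injective
      rw [h, Finset.coe_univ]
    rw [this, Finset.card_univ] at hlt
    exact lt_irrefl _ hlt

/-- elements fixing a finset pointwise -/
def Fixes (σ : Perm Ω) (Δ : Finset Ω) : Prop := ∀ c ∈ Δ, σ c = c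

lemma Fixes.mono {σ : Perm Ω} {Δ Δ' : Finset Ω} (h : Fixes σ Δ) (hsub : Δ' ⊆ Δ) :
    Fixes σ Δ' := fun c hc => h c (hsub hc)

lemma Fixes.mul {σ τ : Perm Ω} {Δ : Finset Ω} (h : Fixes σ Δ) (h' : Fixes τ Δ) :
    Fixes (σ * τ) Δ := fun c hc => by
  rw [Equiv.Perm.mul_apply, h' c hc, h c hc]

lemma Fixes.inv {σ : Perm Ω} {Δ : Finset Ω} (h : Fixes σ Δ) : Fixes σ⁻¹ Δ := fun c hc => by
  have := h c hc
  conv_lhs => rw [← this]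
  simp

/-- 2-transitivity from transitivity plus one transitive point stabilizer -/
lemma twoTrans_of_stab (htr : ∀ x y : Ω, ∃ σ ∈ G, σ x = y) (c : Ω)
    (hstab : ∀ x y : Ω, x ≠ c → y ≠ c → ∃ σ ∈ G, σ c = c ∧ σ x = y) : TwoTrans G := by
  intro x y x' y' hxy hxy'
  obtain ⟨σ₁, hσ₁G, hσ₁⟩ := htr x c
  obtain ⟨σ₂, hσ₂G, hσ₂⟩ := htr x' c
  have h1 : σ₁ y ≠ c := by
    rw [← hσ₁]; exact fun h => hxy (σ₁.injective h).symm
  have h2 : σ₂ y' ≠ c := by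
    rw [← hσ₂]; exact fun h => hxy' (σ₂.injective h).symm
  obtain ⟨τ, hτG, hτc, hτ⟩ := hstab (σ₁ y) (σ₂ y') h1 h2
  refine ⟨σ₂⁻¹ * τ * σ₁, mul_mem (mul_mem (inv_mem hσ₂G) hτG) hσ₁G, ?_, ?_⟩
  · simp only [Equiv.Perm.mul_apply]
    rw [hσ₁, hτc, ← hσ₂]
    simp
  · simp only [Equiv.Perm.mul_apply]
    rw [hτ]
    simp

/-- the main induction for weak Jordan: 2-transitivity -/
lemma J2core (htr : ∀ x y : Ω, ∃ σ ∈ G, σ x = y)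
    (hbl : ∀ B : Set Ω, IsBlock G B → IsTrivialBlock B) :
    ∀ (K : ℕ) (Δ : Finset Ω), Δ.card = K → 1 ≤ K → K + 2 ≤ Fintype.card Ω →
    (∀ x y : Ω, x ∉ Δ → y ∉ Δ → ∃ σ ∈ G, Fixes σ Δ ∧ σ x = y) → TwoTrans G := by
  intro K
  induction K using Nat.strong_induction_on with
  | _ K IH =>
  intro Δ hcard h1 hn hH
  rcases Nat.lt_or_ge K 2 with hK1 | hK2
  · -- K = 1
    have hK : K = 1 := le_antisymm (by omega) h1
    subst hK
    obtain ⟨c, hc⟩ := Finset.card_eq_one.mp hcard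
    subst hc
    apply twoTrans_of_stab htr c
    intro x y hx hy
    obtain ⟨σ, hσG, hfix, hσ⟩ := hH x y (by simpa using hx) (by simpa using hy)
    exact ⟨σ, hσG, hfix c (Finset.mem_singleton_self c), hσ⟩
  · -- K ≥ 2 : find a mover with the right overlap properties
    have hlt : Δ.card < Fintype.card Ω := by omega
    have key : ∃ σ ∈ G, Δ.image ⇑σ ≠ Δ ∧ (Δ.image ⇑σ ∩ Δ).Nonempty ∧
        ((Δ.image ⇑σ)ᶜ ∩ Δᶜ).Nonempty := by
      rcases Nat.lt_or_ge (Fintype.card Ω) (2 * K) with hbig | hsmall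
      · -- n < 2K : move the complement Δᶜ
        obtain ⟨σ, hσG, hne, hmeet⟩ := exists_mover hbl Δᶜ
          (by rw [Finset.card_compl, hcard]; omega)
          (by rw [Finset.card_compl, hcard]; omega)
        refine ⟨σ, hσG, ?_, ?_, ?_⟩
        · intro h
          apply hne
          rw [image_perm_compl, h]
        · -- |Δ| + |σΔ| = 2K > n forces intersection
          by_contra hemp
          rw [Finset.not_nonempty_iff_eq_empty] at hemp
          have := Finset.card_union_of_disjoint (Finset.disjoint_iff_inter_eq_empty.mpr hemp)
          have hle := Finset.card_le_univ (Δ.image ⇑σ ∪ Δ)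
          rw [this, image_perm_card, hcard] at hle
          omega
        · obtain ⟨z, hz⟩ := hmeet
          refine ⟨z, ?_⟩
          rw [Finset.mem_inter] at hz ⊢
          rw [image_perm_compl] at hz
          exact hz
      · -- n ≥ 2K : move Δ itself
        obtain ⟨σ, hσG, hne, hmeet⟩ := exists_mover hbl Δ (by omega) hlt
        refine ⟨σ, hσG, hne, hmeet, ?_⟩
        by_contra hemp
        rw [Finset.not_nonempty_iff_eq_empty] at hemp
        -- complements of image and Δ are disjoint, i.e. σΔᶜ ⊆ Δ
        have hsub : (Δ.image ⇑σ)ᶜ ⊆ Δ := by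
          intro x hx
          by_contra hxx
          rw [Finset.eq_empty_iff_forall_notMem] at hemp
          exact hemp x (Finset.mem_inter.2 ⟨hx, Finset.mem_compl.2 hxx⟩)
        have hcc : ((Δ.image ⇑σ)ᶜ).card = Fintype.card Ω - K := by
          rw [Finset.card_compl, image_perm_card, hcard]
        -- so n - K ≤ K, with n ≥ 2K gives n = 2K and equality σΔᶜ = Δ
        have hle : Fintype.card Ω - K ≤ K := by
          rw [← hcc, ← hcard]; exact Finset.card_le_card hsub
        have hn2 : Fintype.card Ω = 2 * K := by omega
        have heq : (Δ.image ⇑σ)ᶜ = Δ := Finset.eq_of_subset_of_card_le hsub (by omega)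
        -- then σΔ = Δᶜ, contradicting the nonempty intersection
        obtain ⟨z, hz⟩ := hmeet
        rw [Finset.mem_inter] at hz
        have : z ∈ (Δ.image ⇑σ)ᶜ := by rw [heq]; exact hz.2
        rw [Finset.mem_compl] at this
        exact this hz.1
    obtain ⟨σ, hσG, hne, hmeet, hmeetc⟩ := key
    set Δ' := Δ.image ⇑σ ∩ Δ with hΔ'
    obtain ⟨z, hzmem⟩ := hmeetc
    rw [Finset.mem_inter, Finset.mem_compl, Finset.mem_compl] at hzmem
    -- the new witness family for Δ'
    have hstep : ∀ x : Ω, x ∉ Δ' → ∃ τ ∈ G, Fixes τ Δ' ∧ τ x = z := by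
      intro x hx
      rw [hΔ', Finset.mem_inter] at hx
      push_neg at hx
      rcases Classical.em (x ∈ Δ.image ⇑σ) with hx1 | hx1
      · -- x ∉ Δ
        obtain ⟨τ, hτG, hfix, hτ⟩ := hH x z (hx hx1) hzmem.2
        exact ⟨τ, hτG, hfix.mono Finset.inter_subset_right, hτ⟩
      · -- x ∉ σΔ : conjugate the family
        have hx' : σ⁻¹ x ∉ Δ := fun h => hx1 (mem_image_perm.mpr h)
        have hz' : σ⁻¹ z ∉ Δ := fun h => hzmem.1 (mem_image_perm.mpr h)
        obtain ⟨τ, hτG, hfix, hτ⟩ := hH (σ⁻¹ x) (σ⁻¹ z) hx' hz'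
        refine ⟨σ * τ * σ⁻¹, mul_mem (mul_mem hσG hτG) (inv_mem hσG), ?_, ?_⟩
        · intro c hc
          rw [hΔ', Finset.mem_inter] at hc
          have : σ⁻¹ c ∈ Δ := mem_image_perm.mp hc.1
          simp only [Equiv.Perm.mul_apply]
          rw [hfix _ this]
          simp
        · simp only [Equiv.Perm.mul_apply]
          rw [hτ]
          simp
    have hH' : ∀ x y : Ω, x ∉ Δ' → y ∉ Δ' → ∃ τ ∈ G, Fixes τ Δ' ∧ τ x = y := by
      intro x y hx hy
      obtain ⟨τ₁, h₁G, h₁f, h₁⟩ := hstep x hx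
      obtain ⟨τ₂, h₂G, h₂f, h₂⟩ := hstep y hy
      refine ⟨τ₂⁻¹ * τ₁, mul_mem (inv_mem h₂G) h₁G, h₂f.inv.mul h₁f, ?_⟩
      rw [Equiv.Perm.mul_apply, h₁, ← h₂]
      simp
    -- Δ' is smaller
    have hlt' : Δ'.card < K := by
      have hsub : Δ' ⊆ Δ := Finset.inter_subset_right
      have hne' : Δ' ≠ Δ := by
        intro h
        -- then Δ ⊆ σΔ hence equal by cards
        have hsub2 : Δ ⊆ Δ.image ⇑σ := by
          intro c hc
          have : c ∈ Δ' := h ▸ hc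
          exact (Finset.mem_inter.1 this).1
        exact hne (Finset.eq_of_subset_of_card_le hsub2 (by rw [image_perm_card])).symm
      calc Δ'.card < Δ.card := Finset.card_lt_card (lt_of_le_of_ne hsub hne')
        _ = K := hcard
    have hpos : 1 ≤ Δ'.card := by
      obtain ⟨w, hw⟩ := hmeet
      exact Finset.card_pos.mpr ⟨w, hw⟩
    exact IH Δ'.card hlt' Δ' rfl hpos (by omega) hH'

end J2

section Cyc
variable {Ω : Type*} [Fintype Ω] [DecidableEq Ω]

lemma pow_apply_eq_self {g : Perm Ω} {x : Ω} (h : g x = x) (i : ℕ) : (g^i) x = x := by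
  induction i with
  | zero => rfl
  | succ j hj => rw [pow_succ, Equiv.Perm.mul_apply, h, hj]

lemma zpow_apply_eq_self {g : Perm Ω} {x : Ω} (h : g x = x) (i : ℤ) : (g^i) x = x := by
  cases i with
  | ofNat j => exact pow_apply_eq_self h j
  | negSucc j =>
      have := pow_apply_eq_self h (j+1)
      rw [zpow_negSucc]
      conv_lhs => rw [← this]
      simp

lemma pow_apply_mem_support {g : Perm Ω} {x : Ω} (h : x ∈ g.support) (i : ℕ) :
    (g^i) x ∈ g.support := by
  rw [Equiv.Perm.mem_support] at *
  intro hcon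
  apply h
  have heq : g ((g^i) x) = (g^i) (g x) := by
    rw [← Equiv.Perm.mul_apply, ← Equiv.Perm.mul_apply, ← pow_succ, ← pow_succ']
  rw [heq] at hcon
  exact Equiv.injective _ hcon

lemma cycle_trans {g : Perm Ω} (hc : g.IsCycle) {x y : Ω}
    (hx : x ∈ g.support) (hy : y ∈ g.support) : ∃ i : ℤ, (g^i) x = y := by
  obtain ⟨x₀, hx₀, hall⟩ := hc
  rw [Equiv.Perm.mem_support] at hx hy
  exact ((hall hx).symm.trans (hall hy))

lemma cycle_pow_moves {g : Perm Ω} (hc : g.IsCycle) {e : ℕ} (he0 : 0 < e)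
    (hem : e < g.support.card) {u : Ω} (hu : u ∈ g.support) : (g^e) u ≠ u := by
  intro hcon
  have h1 : g^e = 1 := by
    rw [hc.pow_eq_one_iff]
    exact ⟨u, Equiv.Perm.mem_support.mp hu, hcon⟩
  have := orderOf_dvd_of_pow_eq_one h1
  rw [hc.orderOf] at this
  have := Nat.le_of_dvd he0 this
  omega

variable (G : Subgroup (Perm Ω)) (a : Ω) (B : Finset Ω)

/-- translates of the block `B` under the stabilizer of `a` in `G` -/
def Blk (D : Finset Ω) : Prop := ∃ σ : Perm Ω, σ ∈ G ∧ σ a = a ∧ D = B.image ⇑σ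

/-- two points lie in a common block translate -/
def Sim (x y : Ω) : Prop := ∃ D, Blk G a B D ∧ x ∈ D ∧ y ∈ D

variable {G a B}
variable (hBblk : ∀ σ : Perm Ω, σ ∈ G → σ a = a → (B.image ⇑σ = B ∨ B.image ⇑σ ∩ B = ∅))

lemma blk_self : Blk G a B B :=
  ⟨1, one_mem G, rfl, by simp⟩

lemma blk_card {D : Finset Ω} (h : Blk G a B D) : D.card = B.card := by
  obtain ⟨σ, -, -, rfl⟩ := h; exact image_perm_card

lemma blk_not_mem_a (haB : a ∉ B) {D : Finset Ω} (h : Blk G a B D) : a ∉ D := by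
  obtain ⟨σ, -, hσa, rfl⟩ := h
  rw [mem_image_perm]
  intro hmem
  apply haB
  have : σ⁻¹ a = a := by
    conv_lhs => rw [← hσa]
    simp
  rwa [this] at hmem

include hBblk in
lemma blk_disj {D D' : Finset Ω} (h : Blk G a B D) (h' : Blk G a B D') :
    D = D' ∨ D ∩ D' = ∅ := by
  obtain ⟨σ, hσG, hσa, rfl⟩ := h
  obtain ⟨τ, hτG, hτa, rfl⟩ := h'
  have hτia : τ⁻¹ a = a := by
    conv_lhs => rw [← hτa]
    exact τ.symm_apply_apply a
  rcases hBblk (τ⁻¹ * σ) (mul_mem (inv_mem hτG) hσG)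
      (by rw [Equiv.Perm.mul_apply, hσa, hτia]) with h | h
  · left
    have : (B.image ⇑(τ⁻¹ * σ)).image ⇑τ = B.image ⇑τ := by rw [h]
    rw [image_perm_mul] at this
    have harr : τ * (τ⁻¹ * σ) = σ := by group
    rwa [harr] at this
  · right
    rw [Finset.eq_empty_iff_forall_notMem] at h ⊢
    intro x hx
    rw [Finset.mem_inter] at hx
    obtain ⟨hx1, hx2⟩ := hx
    apply h ((τ⁻¹ * σ) (σ⁻¹ x))
    rw [Finset.mem_inter]
    constructor
    · apply Finset.mem_image_of_mem
      exact mem_image_perm.mp hx1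
    · have : (τ⁻¹ * σ) (σ⁻¹ x) = τ⁻¹ x := by simp
      rw [this]
      exact mem_image_perm.mp hx2

include hBblk in
lemma blk_translate {D : Finset Ω} (h : Blk G a B D) {σ : Perm Ω} (hσG : σ ∈ G)
    (hσa : σ a = a) : Blk G a B (D.image ⇑σ) := by
  obtain ⟨π, hπG, hπa, rfl⟩ := h
  exact ⟨σ * π, mul_mem hσG hπG, by rw [Equiv.Perm.mul_apply, hπa, hσa], image_perm_mul⟩

lemma blk_cover (htwo : TwoTrans G) (haB : a ∉ B) (hB0 : B.Nonempty) {x : Ω} (hx : x ≠ a) :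
    ∃ D, Blk G a B D ∧ x ∈ D := by
  obtain ⟨x₀, hx₀⟩ := hB0
  have hx₀a : x₀ ≠ a := fun h => haB (h ▸ hx₀)
  obtain ⟨σ, hσG, hσa, hσx⟩ := htwo a x₀ a x (Ne.symm hx₀a) (Ne.symm hx)
  exact ⟨B.image ⇑σ, ⟨σ, hσG, hσa, rfl⟩, hσx ▸ Finset.mem_image_of_mem _ hx₀⟩

include hBblk in
lemma sim_mem_iff {D : Finset Ω} (hD : Blk G a B D) {x : Ω} (hx : x ∈ D) (y : Ω) :
    Sim G a B x y ↔ y ∈ D := by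
  constructor
  · rintro ⟨D', hD', hxD', hyD'⟩
    rcases blk_disj hBblk hD' hD with h | h
    · exact h ▸ hyD'
    · exfalso
      rw [Finset.eq_empty_iff_forall_notMem] at h
      exact h x (Finset.mem_inter.2 ⟨hxD', hx⟩)
  · intro hy; exact ⟨D, hD, hx, hy⟩

lemma closure_zpow {h : Perm Ω} {D : Finset Ω} (hinv : D.image ⇑h = D) :
    ∀ (i : ℤ), ∀ x ∈ D, (h^i) x ∈ D := by
  have hfwd : ∀ x ∈ D, h x ∈ D := by
    intro x hx
    rw [← hinv]
    exact Finset.mem_image_of_mem _ hx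
  have hbwd : ∀ x ∈ D, h⁻¹ x ∈ D := by
    intro x hx
    rw [← hinv] at hx
    obtain ⟨z, hz, rfl⟩ := Finset.mem_image.mp hx
    simpa using hz
  have hnat : ∀ (j : ℕ), ∀ x ∈ D, (h^j) x ∈ D := by
    intro j
    induction j with
    | zero => intro x hx; exact hx
    | succ i hi =>
        intro x hx
        rw [pow_succ, Equiv.Perm.mul_apply]
        exact hi _ (hfwd x hx)
  have hnat' : ∀ (j : ℕ), ∀ x ∈ D, ((h⁻¹)^j) x ∈ D := by
    intro j
    induction j with
    | zero => intro x hx; exact hx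
    | succ i hi =>
        intro x hx
        rw [pow_succ, Equiv.Perm.mul_apply]
        exact hi _ (hbwd x hx)
  intro i
  cases i with
  | ofNat j => exact hnat j
  | negSucc j =>
      intro x hx
      rw [zpow_negSucc, ← inv_pow]
      exact hnat' (j+1) x hx

include hBblk in
lemma blk_meet_sub (haB : a ∉ B) {h : Perm Ω} (hhG : h ∈ G) (hha : h a = a)
    (hhc : h.IsCycle)
    (hno : ¬ ∃ D, Blk G a B D ∧ h.support ⊆ D) :
    ∀ D, Blk G a B D → (D ∩ h.support).Nonempty → D ⊆ h.support := by
  intro D hD hmeet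
  by_contra hns
  obtain ⟨p, hpD, hpT⟩ := Finset.not_subset.mp hns
  have hpa : p ≠ a := fun hq => (blk_not_mem_a haB hD) (hq ▸ hpD)
  have hphp : h p = p := by
    by_contra hmove
    exact hpT (Equiv.Perm.mem_support.mpr hmove)
  -- D is h-invariant
  have hDinv : D.image ⇑h = D := by
    rcases blk_disj hBblk (blk_translate hBblk hD hhG hha) hD with hEq | hEmp
    · exact hEq
    · exfalso
      rw [Finset.eq_empty_iff_forall_notMem] at hEmp
      apply hEmp p
      rw [Finset.mem_inter]
      exact ⟨by rw [← hphp]; exact Finset.mem_image_of_mem _ hpD, hpD⟩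
  -- then D contains all of the support
  apply hno
  refine ⟨D, hD, ?_⟩
  obtain ⟨x₁, hx₁⟩ := hmeet
  rw [Finset.mem_inter] at hx₁
  intro y hy
  obtain ⟨i, hi⟩ := cycle_trans hhc hx₁.2 hy
  rw [← hi]
  exact closure_zpow hDinv i x₁ hx₁.1

include hBblk in
lemma blk_key (haB : a ∉ B) (htwo : TwoTrans G) (hB0 : B.Nonempty)
    {h : Perm Ω} (hhG : h ∈ G) (hha : h a = a) (hhc : h.IsCycle)
    {e : ℕ} (heq : (B.card ∣ h.support.card) → e = h.support.card / B.card) :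
    ∀ x ∈ h.support, Sim G a B x ((h^e) x) := by
  intro x hx
  have hxe : (h^e) x ∈ h.support := pow_apply_mem_support hx e
  rcases Classical.em (∃ D, Blk G a B D ∧ h.support ⊆ D) with ⟨D, hD, hsub⟩ | hno
  · exact ⟨D, hD, hsub hx, hsub hxe⟩
  · have hmeet := blk_meet_sub hBblk haB hhG hha hhc hno
    have hxa : x ≠ a := by
      intro hq
      subst hq
      rw [Equiv.Perm.mem_support] at hx
      exact hx hha
    obtain ⟨D, hD, hxD⟩ := blk_cover htwo haB hB0 hxa
    have hDT : D ⊆ h.support := hmeet D hD ⟨x, Finset.mem_inter.2 ⟨hxD, hx⟩⟩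
    -- period of D under h
    have hm1 : h ^ (h.support.card) = 1 := by
      rw [← hhc.orderOf]
      exact pow_orderOf_eq_one h
    have hPm : 0 < h.support.card ∧ D.image ⇑(h ^ (h.support.card)) = D := by
      refine ⟨?_, ?_⟩
      · have := hhc.two_le_card_support; omega
      · rw [hm1]; simp
    set P : ℕ → Prop := fun j => 0 < j ∧ D.image ⇑(h ^ j) = D with hP
    have hex : ∃ j, P j := ⟨_, hPm⟩
    set t := Nat.find hex with ht
    obtain ⟨ht0, htinv⟩ : P t := Nat.find_spec hex
    have htmin : ∀ j, j < t → ¬ P j := fun j hj => Nat.find_min hex hj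
    -- powers of h fix a and are in G
    have hpow_mem : ∀ i : ℕ, h^i ∈ G := fun i => pow_mem hhG i
    have hpow_a : ∀ i : ℕ, (h^i) a = a := fun i => pow_apply_eq_self hha i
    -- the t translates of D are pairwise disjoint
    have himg_inj : ∀ (i : ℕ) (X Y : Finset Ω), X.image ⇑(h^i) = Y.image ⇑(h^i) → X = Y := by
      intro i X Y hXY
      have : (X.image ⇑(h^i)).image ⇑((h^i)⁻¹) = (Y.image ⇑(h^i)).image ⇑((h^i)⁻¹) := by rw [hXY]
      rw [image_perm_mul, image_perm_mul, inv_mul_cancel] at this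
      simpa using this
    have hdisj : ∀ i j, i < j → j < t → (D.image ⇑(h^i)) ∩ (D.image ⇑(h^j)) = ∅ := by
      intro i j hij hjt
      rcases blk_disj hBblk (blk_translate hBblk hD (hpow_mem i) (hpow_a i))
        (blk_translate hBblk hD (hpow_mem j) (hpow_a j)) with hEq | hEmp
      · exfalso
        apply htmin (j - i) (by omega)
        refine ⟨by omega, ?_⟩
        apply himg_inj i
        rw [image_perm_mul, ← pow_add]
        have : i + (j - i) = j := by omega
        rw [this, hEq]
      · exact hEmp
    -- the union of the translates is the whole support
    set U := (Finset.range t).biUnion (fun i => D.image ⇑(h^i)) with hU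
    have hUsub : U ⊆ h.support := by
      intro y hy
      rw [hU, Finset.mem_biUnion] at hy
      obtain ⟨i, hi, hyi⟩ := hy
      obtain ⟨d, hd, rfl⟩ := Finset.mem_image.mp hyi
      exact pow_apply_mem_support (hDT hd) i
    have hDU : D ⊆ U := by
      intro d hd
      rw [hU, Finset.mem_biUnion]
      exact ⟨0, Finset.mem_range.mpr ht0, by simpa using hd⟩
    have hUfwd : ∀ y ∈ U, h y ∈ U := by
      intro y hy
      rw [hU, Finset.mem_biUnion] at hy ⊢
      obtain ⟨i, hi, hyi⟩ := hy
      obtain ⟨d, hd, rfl⟩ := Finset.mem_image.mp hyi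
      rcases Classical.em (i + 1 < t) with hlt | hge
      · refine ⟨i+1, Finset.mem_range.mpr hlt, ?_⟩
        have : h ((h ^ i) d) = (h^(i+1)) d := by
          rw [pow_succ', Equiv.Perm.mul_apply]
        rw [this]
        exact Finset.mem_image_of_mem _ hd
      · have hit : i + 1 = t := by rw [Finset.mem_range] at hi; omega
        refine ⟨0, Finset.mem_range.mpr ht0, ?_⟩
        have : h ((h ^ i) d) = (h^t) d := by
          rw [← hit, pow_succ', Equiv.Perm.mul_apply]
        rw [this]
        simp only [pow_zero]
        rw [← htinv]
        simp only [Finset.image_image]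
        have : (h^t) d ∈ (D.image ⇑(h^t)) := Finset.mem_image_of_mem _ hd
        simpa using this
    have hUbwd : ∀ y ∈ U, h⁻¹ y ∈ U := by
      intro y hy
      -- U is finite and h maps U into U injectively hence onto
      have himg : U.image ⇑h = U := by
        apply Finset.eq_of_subset_of_card_le
        · intro z hz
          obtain ⟨w, hw, rfl⟩ := Finset.mem_image.mp hz
          exact hUfwd w hw
        · rw [image_perm_card]
      rw [← himg] at hy
      obtain ⟨z, hz, rfl⟩ := Finset.mem_image.mp hy
      simpa using hz
    have hUinv : U.image ⇑h = U := by
      apply Finset.eq_of_subset_of_card_le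
      · intro z hz
        obtain ⟨w, hw, rfl⟩ := Finset.mem_image.mp hz
        exact hUfwd w hw
      · rw [image_perm_card]
    have hUT : U = h.support := by
      apply Finset.Subset.antisymm hUsub
      intro y hy
      obtain ⟨i, hi⟩ := cycle_trans hhc hx hy
      rw [← hi]
      exact closure_zpow hUinv i x (hDU hxD)
    -- counting: support size is t * |B|
    have hcard : h.support.card = t * B.card := by
      rw [← hUT, hU, Finset.card_biUnion]
      · rw [Finset.sum_congr rfl (fun i _ => image_perm_card.trans (blk_card hD))]
        simp [Finset.sum_const, Finset.card_range, mul_comm]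
      · intro i hi j hj hij
        rw [Finset.mem_coe, Finset.mem_range] at hi hj
        rw [Function.onFun, Finset.disjoint_left]
        intro z hzi hzj
        rcases Nat.lt_or_ge i j with hlt | hge
        · have := hdisj i j hlt hj
          rw [Finset.eq_empty_iff_forall_notMem] at this
          exact this z (Finset.mem_inter.2 ⟨hzi, hzj⟩)
        · have hji : j < i := by omega
          have := hdisj j i hji hi
          rw [Finset.eq_empty_iff_forall_notMem] at this
          exact this z (Finset.mem_inter.2 ⟨hzj, hzi⟩)
    have hb0 : 0 < B.card := Finset.card_pos.mpr hB0
    have hdvd : B.card ∣ h.support.card := ⟨t, by rw [hcard, mul_comm]⟩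
    have het : e = t := by
      rw [heq hdvd, hcard, Nat.mul_div_cancel _ hb0]
    have hxeD : (h^e) x ∈ D := by
      rw [het, ← htinv]
      exact Finset.mem_image_of_mem _ hxD
    exact ⟨D, hD, hxD, hxeD⟩

open scoped Classical in
/-- transporter of an ordered pair to an ordered pair, within `G` -/
noncomputable def Tset (G : Subgroup (Perm Ω)) (u v x y : Ω) : Finset (Perm Ω) :=
  Finset.univ.filter (fun δ => δ ∈ G ∧ δ u = x ∧ δ v = y)

open scoped Classical in
lemma mem_Tset {G : Subgroup (Perm Ω)} {u v x y : Ω} {δ : Perm Ω} :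
    δ ∈ Tset G u v x y ↔ δ ∈ G ∧ δ u = x ∧ δ v = y := by
  simp [Tset]

lemma Tcard_const {G : Subgroup (Perm Ω)} (htwo : TwoTrans G) {u v x y u' v' x' y' : Ω}
    (huv : u ≠ v) (hxy : x ≠ y) (huv' : u' ≠ v') (hxy' : x' ≠ y') :
    (Tset G u v x y).card = (Tset G u' v' x' y').card := by
  obtain ⟨α, hαG, hα1, hα2⟩ := htwo u' v' u v huv' huv
  obtain ⟨β, hβG, hβ1, hβ2⟩ := htwo x y x' y' hxy hxy'
  apply Finset.card_nbij' (fun δ => β * δ * α) (fun δ' => β⁻¹ * δ' * α⁻¹)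
  · intro δ hδ
    obtain ⟨hG, h1, h2⟩ := mem_Tset.mp hδ
    refine mem_Tset.mpr ⟨mul_mem (mul_mem hβG hG) hαG, ?_, ?_⟩
    · rw [Equiv.Perm.mul_apply, Equiv.Perm.mul_apply, hα1, h1, hβ1]
    · rw [Equiv.Perm.mul_apply, Equiv.Perm.mul_apply, hα2, h2, hβ2]
  · intro δ' hδ'
    obtain ⟨hG, h1, h2⟩ := mem_Tset.mp hδ'
    refine mem_Tset.mpr ⟨mul_mem (mul_mem (inv_mem hβG) hG) (inv_mem hαG), ?_, ?_⟩
    · have hαu : α⁻¹ u = u' := by rw [← hα1, ← Equiv.Perm.mul_apply, inv_mul_cancel, Equiv.Perm.one_apply]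
      have hβx : β⁻¹ x' = x := by rw [← hβ1, ← Equiv.Perm.mul_apply, inv_mul_cancel, Equiv.Perm.one_apply]
      rw [Equiv.Perm.mul_apply, Equiv.Perm.mul_apply, hαu, h1, hβx]
    · have hαv : α⁻¹ v = v' := by rw [← hα2, ← Equiv.Perm.mul_apply, inv_mul_cancel, Equiv.Perm.one_apply]
      have hβy : β⁻¹ y' = y := by rw [← hβ2, ← Equiv.Perm.mul_apply, inv_mul_cancel, Equiv.Perm.one_apply]
      rw [Equiv.Perm.mul_apply, Equiv.Perm.mul_apply, hαv, h2, hβy]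
  · intro δ _; group
  · intro δ _; group

set_option maxHeartbeats 2000000 in
open scoped Classical in
/-- The stabilizer of a fixed point of the cycle acts primitively outside that point:
    no nontrivial block exists. -/
lemma Pcycle {G : Subgroup (Perm Ω)} (htwo : TwoTrans G)
    {g : Perm Ω} (hg : g ∈ G) (hc : g.IsCycle) {a : Ω} (ha : g a = a)
    (hk : 2 ≤ (g.supportᶜ).card)
    {B : Finset Ω} (haB : a ∉ B) (hB2 : 2 ≤ B.card) (hBsmall : B.card < Fintype.card Ω - 1)
    (hBblk : ∀ σ : Perm Ω, σ ∈ G → σ a = a → (B.image ⇑σ = B ∨ B.image ⇑σ ∩ B = ∅)) :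
    False := by
  set n := Fintype.card Ω with hn
  set S := g.support with hS
  set m := S.card with hm
  set b := B.card with hb
  have hm2 : 2 ≤ m := hc.two_le_card_support
  have haS : a ∉ S := by rw [hS, Equiv.Perm.mem_support]; exact fun h => h ha
  have hkm : (g.supportᶜ).card = n - m := by rw [Finset.card_compl]
  have hmn : m ≤ n - 2 := by rw [hkm] at hk; omega
  have hmn' : m < n := by omega
  have hB0 : B.Nonempty := Finset.card_pos.mp (by omega)
  -- the exponent e
  set e : ℕ := if b ∣ m then m / b else 1 with he
  have hbm_le : b ∣ m → b ≤ m := fun hd => Nat.le_of_dvd (by omega) hd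
  have he0 : 0 < e := by
    rw [he]
    split_ifs with hd
    · exact Nat.div_pos (hbm_le hd) (by omega)
    · omega
  have hem : e < m := by
    rw [he]
    split_ifs with hd
    · exact Nat.div_lt_self (by omega) (by omega)
    · omega
  -- the same-block property for all conjugates avoiding a
  have key : ∀ δ : Perm Ω, δ ∈ G → δ⁻¹ a ∉ S → ∀ u ∈ S,
      Sim G a B (δ u) (δ ((g^e) u)) := by
    intro δ hδG hδa u hu
    set h := δ * g * δ⁻¹ with hh
    have hhG : h ∈ G := mul_mem (mul_mem hδG hg) (inv_mem hδG)
    have hfixi : g (δ⁻¹ a) = δ⁻¹ a := by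
      by_contra hcon
      exact hδa (Equiv.Perm.mem_support.mpr hcon)
    have hha : h a = a := by
      rw [hh]
      simp only [Equiv.Perm.mul_apply]
      rw [hfixi]
      simp
    have hhc : h.IsCycle := hc.conj
    have hsupp : h.support = S.image ⇑δ := by
      rw [hh, Equiv.Perm.support_conj, Finset.map_eq_image]
      rfl
    have hsc : h.support.card = m := by rw [hsupp, image_perm_card]
    have hkey := blk_key hBblk haB htwo hB0 hhG hha hhc (e := e) (by
      intro hd
      rw [hsc] at hd ⊢
      rw [he, if_pos hd])
    have huT : δ u ∈ h.support := by
      rw [hsupp]; exact Finset.mem_image_of_mem _ hu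
    have hres := hkey (δ u) huT
    have hrw : (h^e) (δ u) = δ ((g^e) u) := by
      rw [hh, conj_pow]
      simp [Equiv.Perm.mul_apply]
    rwa [hrw] at hres
  -- transporter count
  obtain ⟨w₀, hw₀⟩ : S.Nonempty := Finset.card_pos.mp (by omega)
  have haw₀ : a ≠ w₀ := fun h => haS (h ▸ hw₀)
  set τ := (Tset G a w₀ a w₀).card with hτ
  have hτpos : 0 < τ := by
    rw [hτ, Finset.card_pos]
    exact ⟨1, mem_Tset.mpr ⟨one_mem G, rfl, rfl⟩⟩
  have hTτ : ∀ u v x y : Ω, u ≠ v → x ≠ y → (Tset G u v x y).card = τ :=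
    fun u v x y huv hxy => Tcard_const htwo huv hxy haw₀ haw₀
  -- cross pairs
  set CPs : Finset (Ω × Ω) :=
    Finset.univ.filter (fun q => q.1 ≠ a ∧ q.2 ≠ a ∧ ¬ Sim G a B q.1 q.2) with hCPs
  -- each class has size b
  have hclass : ∀ x : Ω, x ≠ a →
      ((Finset.univ.erase a).filter (fun y => Sim G a B x y)).card = b := by
    intro x hx
    obtain ⟨D, hD, hxD⟩ := blk_cover htwo haB hB0 hx
    have hfe : (Finset.univ.erase a).filter (fun y => Sim G a B x y) = D := by
      ext y
      rw [Finset.mem_filter, Finset.mem_erase]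
      constructor
      · rintro ⟨-, hsim⟩
        exact (sim_mem_iff hBblk hD hxD y).mp hsim
      · intro hyD
        exact ⟨⟨fun hq => blk_not_mem_a haB hD (hq ▸ hyD), Finset.mem_univ y⟩,
          (sim_mem_iff hBblk hD hxD y).mpr hyD⟩
    rw [hfe, blk_card hD]
  have hCP : CPs.card = (n-1) * ((n-1) - b) := by
    rw [Finset.card_eq_sum_card_fiberwise (f := fun q : Ω × Ω => q.1)
      (t := Finset.univ.erase a) (by
        intro q hq
        rw [hCPs, Finset.mem_coe, Finset.mem_filter] at hq
        exact Finset.mem_erase.mpr ⟨hq.2.1, Finset.mem_univ _⟩)]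
    have hfib : ∀ x ∈ Finset.univ.erase a,
        (CPs.filter (fun q => q.1 = x)).card = (n-1) - b := by
      intro x hxmem
      rw [Finset.mem_erase] at hxmem
      have hbij : (CPs.filter (fun q => q.1 = x)).card
          = ((Finset.univ.erase a).filter (fun y => ¬ Sim G a B x y)).card := by
        apply Finset.card_nbij' (fun q => q.2) (fun y => (x, y))
        · intro q hq
          rw [Finset.mem_coe, Finset.mem_filter] at hq
          obtain ⟨hqc, hq1⟩ := hq
          rw [hCPs, Finset.mem_filter] at hqc
          rw [Finset.mem_coe, Finset.mem_filter, Finset.mem_erase]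
          exact ⟨⟨hqc.2.2.1, Finset.mem_univ _⟩, hq1 ▸ hqc.2.2.2⟩
        · intro y hy
          rw [Finset.mem_coe, Finset.mem_filter, Finset.mem_erase] at hy
          rw [Finset.mem_coe, Finset.mem_filter, hCPs, Finset.mem_filter]
          exact ⟨⟨Finset.mem_univ _, hxmem.1, hy.1.1, hy.2⟩, rfl⟩
        · intro q hq
          rw [Finset.mem_coe, Finset.mem_filter] at hq
          exact Prod.ext hq.2.symm rfl
        · intro y _; rfl
      rw [hbij]
      have hsplit := Finset.card_filter_add_card_filter_not
        (s := Finset.univ.erase a) (p := fun y => Sim G a B x y)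
      rw [hclass x hxmem.1] at hsplit
      rw [Finset.card_erase_of_mem (Finset.mem_univ a), Finset.card_univ] at hsplit
      omega
    rw [Finset.sum_congr rfl hfib, Finset.sum_const,
      Finset.card_erase_of_mem (Finset.mem_univ a), Finset.card_univ, smul_eq_mul]
  -- the double count
  have hcross_ne : ∀ q : Ω × Ω, q ∈ CPs → q.1 ≠ q.2 := by
    intro q hq
    rw [hCPs, Finset.mem_filter] at hq
    obtain ⟨-, h1, h2, h3⟩ := hq
    intro hcon
    apply h3
    obtain ⟨D, hD, hxD⟩ := blk_cover htwo haB hB0 h1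
    exact ⟨D, hD, hxD, hcon ▸ hxD⟩
  have hge_moves : ∀ u ∈ S, (g^e) u ≠ u := fun u hu => cycle_pow_moves hc he0 hem hu
  have hperU : ∀ u ∈ S,
      (Finset.univ.filter (fun δ : Perm Ω => δ ∈ G ∧
        ((δ u, δ ((g^e) u)) ∈ CPs))).card = CPs.card * τ := by
    intro u hu
    rw [Finset.card_eq_sum_card_fiberwise
      (f := fun δ : Perm Ω => (δ u, δ ((g ^ e) u))) (t := CPs) (by
        intro δ hδ
        exact (Finset.mem_filter.mp hδ).2.2)]
    have hfib : ∀ q ∈ CPs,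
        ((Finset.univ.filter (fun δ : Perm Ω => δ ∈ G ∧ ((δ u, δ ((g^e) u)) ∈ CPs))).filter
          (fun δ => (δ u, δ ((g ^ e) u)) = q)).card = τ := by
      intro q hq
      have hfe : (Finset.univ.filter (fun δ : Perm Ω => δ ∈ G ∧ ((δ u, δ ((g^e) u)) ∈ CPs))).filter
          (fun δ => (δ u, δ ((g ^ e) u)) = q) = Tset G u ((g^e) u) q.1 q.2 := by
        ext δ
        rw [Finset.mem_filter, Finset.mem_filter, mem_Tset]
        constructor
        · rintro ⟨⟨-, hδG, -⟩, heqq⟩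
          exact ⟨hδG, congrArg Prod.fst heqq, congrArg Prod.snd heqq⟩
        · rintro ⟨hδG, h1, h2⟩
          have heqq : (δ u, δ ((g ^ e) u)) = q := Prod.ext h1 h2
          exact ⟨⟨Finset.mem_univ _, hδG, heqq ▸ hq⟩, heqq⟩
      rw [hfe]
      exact hTτ _ _ _ _ (Ne.symm (hge_moves u hu)) (hcross_ne q hq)
    rw [Finset.sum_congr rfl hfib, Finset.sum_const, smul_eq_mul]
  have hNa : (Finset.univ.filter (fun δ : Perm Ω => δ ∈ G ∧ δ⁻¹ a ∈ S)).card
      = m * ((n-1) * τ) := by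
    have hnontriv : Nontrivial Ω := by
      rw [← Fintype.one_lt_card_iff_nontrivial]
      omega
    rw [Finset.card_eq_sum_card_fiberwise (f := fun δ : Perm Ω => δ⁻¹ a) (t := S) (by
      intro δ hδ
      exact (Finset.mem_filter.mp hδ).2.2)]
    have hfib : ∀ u ∈ S,
        ((Finset.univ.filter (fun δ : Perm Ω => δ ∈ G ∧ δ⁻¹ a ∈ S)).filter
          (fun δ => δ⁻¹ a = u)).card = (n-1) * τ := by
      intro u hu
      obtain ⟨w, hwu⟩ := exists_ne u
      have hfe : (Finset.univ.filter (fun δ : Perm Ω => δ ∈ G ∧ δ⁻¹ a ∈ S)).filter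
          (fun δ => δ⁻¹ a = u) = Finset.univ.filter (fun δ : Perm Ω => δ ∈ G ∧ δ u = a) := by
        ext δ
        rw [Finset.mem_filter, Finset.mem_filter, Finset.mem_filter]
        constructor
        · rintro ⟨⟨-, hδG, -⟩, hδu⟩
          refine ⟨Finset.mem_univ _, hδG, ?_⟩
          rw [← hδu]
          simp
        · rintro ⟨-, hδG, hδu⟩
          have hia : δ⁻¹ a = u := by rw [← hδu]; simp
          exact ⟨⟨Finset.mem_univ _, hδG, hia ▸ hu⟩, hia⟩
      rw [hfe]
      rw [Finset.card_eq_sum_card_fiberwise (f := fun δ : Perm Ω => δ w)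
        (t := Finset.univ.erase a) (by
          intro δ hδ
          obtain ⟨-, hδG, hδu⟩ := Finset.mem_filter.mp hδ
          refine Finset.mem_erase.mpr ⟨?_, Finset.mem_univ _⟩
          rw [← hδu]
          exact fun hcon => hwu (δ.injective hcon))]
      have hfib2 : ∀ y ∈ Finset.univ.erase a,
          ((Finset.univ.filter (fun δ : Perm Ω => δ ∈ G ∧ δ u = a)).filter
            (fun δ => δ w = y)).card = τ := by
        intro y hy
        rw [Finset.mem_erase] at hy
        have hfe2 : (Finset.univ.filter (fun δ : Perm Ω => δ ∈ G ∧ δ u = a)).filter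
            (fun δ => δ w = y) = Tset G u w a y := by
          ext δ
          rw [Finset.mem_filter, Finset.mem_filter, mem_Tset]
          constructor
          · rintro ⟨⟨-, h1, h2⟩, h3⟩
            exact ⟨h1, h2, h3⟩
          · rintro ⟨h1, h2, h3⟩
            exact ⟨⟨Finset.mem_univ _, h1, h2⟩, h3⟩
        rw [hfe2]
        exact hTτ _ _ _ _ (Ne.symm hwu) (Ne.symm hy.1)
      rw [Finset.sum_congr rfl hfib2, Finset.sum_const,
        Finset.card_erase_of_mem (Finset.mem_univ a), Finset.card_univ, smul_eq_mul]
    rw [Finset.sum_congr rfl hfib, Finset.sum_const, smul_eq_mul]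
  -- W two ways
  set W := ∑ δ ∈ (Finset.univ : Finset (Perm Ω)),
      (S.filter (fun u => δ ∈ G ∧ ((δ u, δ ((g^e) u)) ∈ CPs))).card with hW
  have hW1 : W = m * (CPs.card * τ) := by
    rw [hW]
    have hconv : ∀ δ : Perm Ω,
        (S.filter (fun u => δ ∈ G ∧ ((δ u, δ ((g^e) u)) ∈ CPs))).card
        = ∑ u ∈ S, if (δ ∈ G ∧ ((δ u, δ ((g^e) u)) ∈ CPs)) then 1 else 0 :=
      fun δ => Finset.card_filter _ _
    rw [Finset.sum_congr rfl (fun δ _ => hconv δ), Finset.sum_comm]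
    have hconv2 : ∀ u ∈ S,
        (∑ δ ∈ (Finset.univ : Finset (Perm Ω)),
          if (δ ∈ G ∧ ((δ u, δ ((g^e) u)) ∈ CPs)) then 1 else 0) = CPs.card * τ := by
      intro u hu
      rw [← Finset.card_filter]
      exact hperU u hu
    rw [Finset.sum_congr rfl hconv2, Finset.sum_const, smul_eq_mul]
  have hW2 : W ≤ (m * ((n-1) * τ)) * (m - 2) := by
    rw [hW, ← hNa]
    have hbound : ∀ δ : Perm Ω,
        (S.filter (fun u => δ ∈ G ∧ ((δ u, δ ((g^e) u)) ∈ CPs))).card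
        ≤ if (δ ∈ G ∧ δ⁻¹ a ∈ S) then (m - 2) else 0 := by
      intro δ
      split_ifs with hcase
      · -- a is in the image : at most m - 2 valid u
        obtain ⟨hδG, hpS⟩ := hcase
        set p := δ⁻¹ a with hp
        set q := (g^e)⁻¹ p with hq
        have hqS : q ∈ S := by
          by_contra hqn
          have hfix : g q = q := by
            by_contra hcon
            exact hqn (Equiv.Perm.mem_support.mpr hcon)
          have : (g^e) q = q := pow_apply_eq_self hfix e
          have hpq : (g^e) q = p := by rw [hq]; simp
          rw [this] at hpq
          exact hqn (hpq ▸ hpS)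
        have hgeq : (g^e) q = p := by rw [hq]; simp
        have hpq : p ≠ q := by
          intro hcon
          have hmv := hge_moves q hqS
          rw [hgeq] at hmv
          exact hmv hcon
        have hsub : (S.filter (fun u => δ ∈ G ∧ ((δ u, δ ((g^e) u)) ∈ CPs)))
            ⊆ (S.erase p).erase q := by
          intro u hufil
          rw [Finset.mem_filter] at hufil
          obtain ⟨huS, -, hucp⟩ := hufil
          rw [hCPs, Finset.mem_filter] at hucp
          obtain ⟨-, h1, h2, -⟩ := hucp
          rw [Finset.mem_erase, Finset.mem_erase]
          refine ⟨?_, ?_, huS⟩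
          · intro hcon
            apply h2
            rw [hcon, hgeq]
            exact Equiv.apply_symm_apply δ a
          · intro hcon
            apply h1
            rw [hcon]
            exact Equiv.apply_symm_apply δ a
        calc (S.filter (fun u => δ ∈ G ∧ ((δ u, δ ((g^e) u)) ∈ CPs))).card
            ≤ ((S.erase p).erase q).card := Finset.card_le_card hsub
          _ = m - 2 := by
            rw [Finset.card_erase_of_mem (Finset.mem_erase.mpr ⟨(Ne.symm hpq), hqS⟩),
              Finset.card_erase_of_mem hpS, ← hm]
            omega
      · -- otherwise the filter is empty
        have hzero : (S.filter (fun u => δ ∈ G ∧ ((δ u, δ ((g^e) u)) ∈ CPs))) = ∅ := by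
          rw [Finset.eq_empty_iff_forall_notMem]
          intro u hufil
          rw [Finset.mem_filter] at hufil
          obtain ⟨huS, hδG, hucp⟩ := hufil
          rw [hCPs, Finset.mem_filter] at hucp
          rcases Classical.em (δ⁻¹ a ∈ S) with hmem | hmem
          · exact hcase ⟨hδG, hmem⟩
          · exact hucp.2.2.2 (key δ hδG hmem u huS)
        rw [hzero]
        simp
    calc (∑ δ ∈ (Finset.univ : Finset (Perm Ω)),
          (S.filter (fun u => δ ∈ G ∧ ((δ u, δ ((g^e) u)) ∈ CPs))).card)
        ≤ ∑ δ ∈ (Finset.univ : Finset (Perm Ω)),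
            (if (δ ∈ G ∧ δ⁻¹ a ∈ S) then (m - 2) else 0) :=
          Finset.sum_le_sum (fun δ _ => hbound δ)
      _ = ∑ δ ∈ Finset.univ.filter (fun δ : Perm Ω => δ ∈ G ∧ δ⁻¹ a ∈ S), (m-2) := by
          rw [Finset.sum_filter]
      _ = (Finset.univ.filter (fun δ : Perm Ω => δ ∈ G ∧ δ⁻¹ a ∈ S)).card * (m - 2) := by
          rw [Finset.sum_const, smul_eq_mul]
  -- conclusion of the counting: b ≥ n - m + 1
  have hineq : CPs.card ≤ (n-1) * (m-2) := by
    rw [hW1] at hW2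
    have h1 : CPs.card * τ ≤ ((n-1) * (m-2)) * τ :=
      Nat.le_of_mul_le_mul_left (by calc
        m * (CPs.card * τ) ≤ (m * ((n-1) * τ)) * (m - 2) := hW2
        _ = m * (((n-1) * (m-2)) * τ) := by ring) (by omega)
    exact Nat.le_of_mul_le_mul_right h1 hτpos
  have hbk : n - m + 1 ≤ b := by
    rw [hCP] at hineq
    have hsub : (n-1) - b ≤ m - 2 := Nat.le_of_mul_le_mul_left hineq (by omega)
    omega
  -- final contradiction
  have hmeetS : ∀ D, Blk G a B D → (D ∩ S).Nonempty := by
    intro D hD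
    by_contra hemp
    rw [Finset.not_nonempty_iff_eq_empty, Finset.eq_empty_iff_forall_notMem] at hemp
    have hsub : D ⊆ Sᶜ.erase a := by
      intro x hx
      rw [Finset.mem_erase, Finset.mem_compl]
      refine ⟨fun hq => blk_not_mem_a haB hD (hq ▸ hx), fun hq => hemp x (Finset.mem_inter.2 ⟨hx, hq⟩)⟩
    have := Finset.card_le_card hsub
    rw [Finset.card_erase_of_mem (Finset.mem_compl.mpr haS), Finset.card_compl, blk_card hD] at this
    omega
  rcases Classical.em (∃ D, Blk G a B D ∧ S ⊆ D) with ⟨D₀, hD₀, hsub₀⟩ | hno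
  · -- a block containing all of S : find a disjoint block which must meet S
    have hyex : ((Finset.univ.erase a) \ D₀).Nonempty := by
      rw [← Finset.card_pos]
      have h1 : ((Finset.univ.erase a) \ D₀).card ≥ (Finset.univ.erase a).card - D₀.card :=
        Finset.le_card_sdiff _ _
      rw [Finset.card_erase_of_mem (Finset.mem_univ a), Finset.card_univ, blk_card hD₀] at h1
      omega
    obtain ⟨y, hy⟩ := hyex
    rw [Finset.mem_sdiff, Finset.mem_erase] at hy
    obtain ⟨⟨hya, -⟩, hyD₀⟩ := hy
    obtain ⟨Dy, hDy, hyDy⟩ := blk_cover htwo haB hB0 hya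
    obtain ⟨z, hz⟩ := hmeetS Dy hDy
    rw [Finset.mem_inter] at hz
    rcases blk_disj hBblk hDy hD₀ with hEq | hEmp
    · exact hyD₀ (hEq ▸ hyDy)
    · rw [Finset.eq_empty_iff_forall_notMem] at hEmp
      exact hEmp z (Finset.mem_inter.2 ⟨hz.1, hsub₀ hz.2⟩)
  · -- no block contains S : all blocks lie inside S, absurd since Sᶜ ≠ {a}
    have hms := blk_meet_sub hBblk haB hg ha hc hno
    have hyex : (Sᶜ.erase a).Nonempty := by
      rw [← Finset.card_pos, Finset.card_erase_of_mem (Finset.mem_compl.mpr haS),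
        Finset.card_compl]
      omega
    obtain ⟨y, hy⟩ := hyex
    rw [Finset.mem_erase, Finset.mem_compl] at hy
    obtain ⟨Dy, hDy, hyDy⟩ := blk_cover htwo haB hB0 hy.1
    exact hy.2 ((hms Dy hDy (hmeetS Dy hDy)) hyDy)

end Cyc

section Restrict
variable {Ω : Type*} [Fintype Ω] [DecidableEq Ω]

variable (G : Subgroup (Perm Ω)) (a : Ω)

/-- the stabilizer of `a` in `G`, as a subgroup of `Perm Ω` -/
def stabSub : Subgroup (Perm Ω) where
  carrier := {σ | σ ∈ G ∧ σ a = a}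
  mul_mem' := by
    rintro σ τ ⟨hσG, hσa⟩ ⟨hτG, hτa⟩
    exact ⟨mul_mem hσG hτG, by rw [Equiv.Perm.mul_apply, hτa, hσa]⟩
  one_mem' := ⟨one_mem G, rfl⟩
  inv_mem' := by
    rintro σ ⟨hσG, hσa⟩
    refine ⟨inv_mem hσG, ?_⟩
    conv_lhs => rw [← hσa]
    simp

lemma stabSub_prop {σ : Perm Ω} (h : σ ∈ stabSub G a) : σ ∈ G ∧ σ a = a := h

lemma ne_iff_of_stab {a : Ω} {σ : Perm Ω} (hσa : σ a = a) : ∀ x : Ω, x ≠ a ↔ σ x ≠ a := by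
  intro x
  constructor
  · intro hx hcon
    exact hx (σ.injective (by rw [hcon, hσa]))
  · intro hx hcon
    exact hx (by rw [hcon, hσa])

/-- restriction homomorphism to the permutations of `Ω \ {a}` -/
def resHom : stabSub G a →* Perm {x : Ω // x ≠ a} where
  toFun := fun σ => σ.1.subtypePerm (fun x => (ne_iff_of_stab σ.2.2 x).symm)
  map_one' := by
    apply Equiv.ext
    intro x
    apply Subtype.ext
    simp [Equiv.Perm.subtypePerm_apply]
  map_mul' := by
    intro σ τ
    apply Equiv.ext
    intro x
    apply Subtype.ext
    simp [Equiv.Perm.subtypePerm_apply]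
    rfl

/-- the restricted group on `Ω \ {a}` -/
def resGrp : Subgroup (Perm {x : Ω // x ≠ a}) := (resHom G a).range

lemma resHom_apply {σ : Perm Ω} (hσ : σ ∈ stabSub G a) (x : {x : Ω // x ≠ a}) :
    (resHom G a ⟨σ, hσ⟩ x : Ω) = σ x := rfl

lemma resHom_inv_apply {σ : Perm Ω} (hσ : σ ∈ stabSub G a) (x : {x : Ω // x ≠ a}) :
    (((resHom G a ⟨σ, hσ⟩)⁻¹ x : {x : Ω // x ≠ a}) : Ω) = σ⁻¹ x := by
  rw [← map_inv]
  rfl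

lemma resGrp_mem {σ : Perm Ω} (hσ : σ ∈ stabSub G a) : resHom G a ⟨σ, hσ⟩ ∈ resGrp G a :=
  ⟨⟨σ, hσ⟩, rfl⟩

lemma resGrp_mem_iff {π : Perm {x : Ω // x ≠ a}} :
    π ∈ resGrp G a ↔ ∃ σ : Perm Ω, ∃ hσ : σ ∈ stabSub G a, π = resHom G a ⟨σ, hσ⟩ := by
  constructor
  · rintro ⟨⟨σ, hσ⟩, rfl⟩
    exact ⟨σ, hσ, rfl⟩
  · rintro ⟨σ, hσ, rfl⟩
    exact resGrp_mem G a hσ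

lemma resHom_pow {σ : Perm Ω} (hσ : σ ∈ stabSub G a) (i : ℤ) :
    (resHom G a ⟨σ, hσ⟩)^i = resHom G a (⟨σ, hσ⟩^i) := by
  rw [map_zpow]

end Restrict

section Transfer
variable {Ω : Type*} [Fintype Ω] [DecidableEq Ω] {G : Subgroup (Perm Ω)} {a : Ω}

lemma res_cycle {g : Perm Ω} (hg : g ∈ G) (hc : g.IsCycle) (ha : g a = a) :
    (resHom G a ⟨g, hg, ha⟩).IsCycle := by
  obtain ⟨x₀, hx₀, hall⟩ := hc
  have hx₀a : x₀ ≠ a := fun h => hx₀ (h ▸ ha)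
  refine ⟨⟨x₀, hx₀a⟩, ?_, ?_⟩
  · intro hcon
    apply hx₀
    have := congrArg Subtype.val hcon
    exact this
  · rintro ⟨y, hya⟩ hy
    have hgy : g y ≠ y := by
      intro hcon
      apply hy
      apply Subtype.ext
      exact hcon
    obtain ⟨i, hi⟩ := hall hgy
    refine ⟨i, ?_⟩
    rw [← map_zpow]
    apply Subtype.ext
    have : ((⟨g, hg, ha⟩ : stabSub G a)^i : stabSub G a).1 = g^i := rfl
    rw [resHom_apply, this]
    exact hi

lemma res_support_card {g : Perm Ω} (hg : g ∈ G) (ha : g a = a) :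
    (resHom G a ⟨g, hg, ha⟩).support.card = g.support.card := by
  apply Finset.card_bij (fun (x : {x : Ω // x ≠ a}) _ => x.1)
  · intro x hx
    rw [Equiv.Perm.mem_support] at hx ⊢
    intro hcon
    apply hx
    apply Subtype.ext
    exact hcon
  · intro x hx y hy hxy
    exact Subtype.ext hxy
  · intro x hx
    rw [Equiv.Perm.mem_support] at hx
    have hxa : x ≠ a := fun h => hx (h ▸ ha)
    refine ⟨⟨x, hxa⟩, ?_, rfl⟩
    rw [Equiv.Perm.mem_support]
    intro hcon
    exact hx (congrArg Subtype.val hcon)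

lemma res_fix_card {g : Perm Ω} (hg : g ∈ G) (ha : g a = a) {k : ℕ}
    (hfix : (g.supportᶜ).card = k) :
    ((resHom G a ⟨g, hg, ha⟩).supportᶜ).card = k - 1 := by
  have hΩ' : Fintype.card {x : Ω // x ≠ a} = Fintype.card Ω - 1 := by
    rw [Fintype.card_subtype_compl, Fintype.card_subtype_eq]
  rw [Finset.card_compl, hΩ', res_support_card hg ha]
  rw [Finset.card_compl] at hfix
  have hsle : g.support.card ≤ Fintype.card Ω - 1 := by
    have : g.support ⊆ Finset.univ.erase a := by
      intro x hx
      refine Finset.mem_erase.mpr ⟨?_, Finset.mem_univ _⟩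
      rw [Equiv.Perm.mem_support] at hx
      exact fun h => hx (h ▸ ha)
    have := Finset.card_le_card this
    rwa [Finset.card_erase_of_mem (Finset.mem_univ a), Finset.card_univ] at this
  omega

lemma res_pretransitive (htwo : TwoTrans G) :
    MulAction.IsPretransitive (resGrp G a) {x : Ω // x ≠ a} := by
  constructor
  rintro ⟨x, hx⟩ ⟨y, hy⟩
  obtain ⟨σ, hσG, hσa, hσx⟩ := htwo a x a y (Ne.symm hx) (Ne.symm hy)
  refine ⟨⟨resHom G a ⟨σ, hσG, hσa⟩, resGrp_mem G a ⟨hσG, hσa⟩⟩, ?_⟩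
  apply Subtype.ext
  exact hσx

lemma res_trivial_blocks (htwo : TwoTrans G)
    {g : Perm Ω} (hg : g ∈ G) (hc : g.IsCycle) (ha : g a = a)
    (hk : 2 ≤ (g.supportᶜ).card) :
    ∀ B' : Set {x : Ω // x ≠ a}, MulAction.IsBlock (resGrp G a) B' →
      MulAction.IsTrivialBlock B' := by
  classical
  intro B' hblk'
  by_contra hcon
  rw [MulAction.IsTrivialBlock, not_or] at hcon
  obtain ⟨hnsub, hnuniv⟩ := hcon
  -- extract two distinct elements and one missing element
  rw [Set.not_subsingleton_iff] at hnsub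
  obtain ⟨x', hx', y', hy', hxy'⟩ := hnsub
  have hz' : ∃ z' : {x : Ω // x ≠ a}, z' ∉ B' := by
    by_contra hall
    push_neg at hall
    exact hnuniv (Set.eq_univ_of_forall hall)
  obtain ⟨z', hz'⟩ := hz'
  -- the ambient finset
  set BF : Finset Ω := Finset.univ.filter (fun x : Ω => ∃ hx : x ≠ a, (⟨x, hx⟩ : {x : Ω // x ≠ a}) ∈ B') with hBF
  have hmemBF : ∀ {x : Ω}, x ∈ BF ↔ ∃ hx : x ≠ a, (⟨x, hx⟩ : {x : Ω // x ≠ a}) ∈ B' := by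
    intro x
    rw [hBF, Finset.mem_filter]
    simp
  have haBF : a ∉ BF := by
    rw [hmemBF]
    rintro ⟨h, -⟩
    exact h rfl
  have hBF2 : 2 ≤ BF.card := by
    refine Finset.one_lt_card.mpr ⟨x'.1, hmemBF.mpr ⟨x'.2, by rw [Subtype.coe_eta]; exact hx'⟩,
      y'.1, hmemBF.mpr ⟨y'.2, by rw [Subtype.coe_eta]; exact hy'⟩, ?_⟩
    intro hcon
    exact hxy' (Subtype.ext hcon)
  have hBFsmall : BF.card < Fintype.card Ω - 1 := by
    have hsub : BF ⊆ (Finset.univ.erase a).erase z'.1 := by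
      intro x hx
      obtain ⟨hxa, hxB⟩ := hmemBF.mp hx
      refine Finset.mem_erase.mpr ⟨?_, Finset.mem_erase.mpr ⟨hxa, Finset.mem_univ _⟩⟩
      intro hcon
      apply hz'
      have : (⟨x, hxa⟩ : {x : Ω // x ≠ a}) = z' := Subtype.ext hcon
      exact this ▸ hxB
    have hle := Finset.card_le_card hsub
    rw [Finset.card_erase_of_mem (Finset.mem_erase.mpr ⟨z'.2, Finset.mem_univ _⟩),
      Finset.card_erase_of_mem (Finset.mem_univ a), Finset.card_univ] at hle
    have hm2 := hc.two_le_card_support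
    have := Finset.card_le_univ g.support
    rw [Finset.card_compl] at hk
    omega
  -- blockness transfers
  have hBFblk : ∀ σ : Perm Ω, σ ∈ G → σ a = a → (BF.image ⇑σ = BF ∨ BF.image ⇑σ ∩ BF = ∅) := by
    intro σ hσG hσa
    set π : resGrp G a := ⟨resHom G a ⟨σ, hσG, hσa⟩, resGrp_mem G a ⟨hσG, hσa⟩⟩ with hπ
    have hmem_smul : ∀ {x : Ω}, x ∈ BF.image ⇑σ ↔
        ∃ hx : x ≠ a, (⟨x, hx⟩ : {x : Ω // x ≠ a}) ∈ π • B' := by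
      intro x
      rw [mem_image_perm, hmemBF]
      have hinv : ∀ (hxa : x ≠ a), (π⁻¹ • (⟨x, hxa⟩ : {x : Ω // x ≠ a}) : {x : Ω // x ≠ a}).1 = σ⁻¹ x := by
        intro hxa
        exact resHom_inv_apply G a ⟨hσG, hσa⟩ ⟨x, hxa⟩
      constructor
      · rintro ⟨hxi, hmem⟩
        have hxa : x ≠ a := by
          intro hcon
          apply hxi
          rw [hcon]
          apply σ.injective
          simp [hσa]
        refine ⟨hxa, ?_⟩
        rw [Set.mem_smul_set_iff_inv_smul_mem]
        have heq : (π⁻¹ • (⟨x, hxa⟩ : {x : Ω // x ≠ a})) = ⟨σ⁻¹ x, hxi⟩ :=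
          Subtype.ext (hinv hxa)
        rw [heq]
        exact hmem
      · rintro ⟨hxa, hmem⟩
        rw [Set.mem_smul_set_iff_inv_smul_mem] at hmem
        have hxi : σ⁻¹ x ≠ a := by
          intro hcon
          have : x = σ a := by rw [← hcon]; simp
          rw [hσa] at this
          exact hxa this
        refine ⟨hxi, ?_⟩
        have heq : (π⁻¹ • (⟨x, hxa⟩ : {x : Ω // x ≠ a})) = ⟨σ⁻¹ x, hxi⟩ :=
          Subtype.ext (hinv hxa)
        rw [← heq]
        exact hmem
    -- use the block property of B'
    rcases Classical.em (π • B' = B') with hEq | hNe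
    · left
      ext x
      rw [hmem_smul, hmemBF, hEq]
    · right
      have hdisj := hblk' (g₁ := π) (g₂ := 1) (by rw [one_smul]; exact hNe)
      rw [one_smul] at hdisj
      rw [Finset.eq_empty_iff_forall_notMem]
      intro x hx
      rw [Finset.mem_inter] at hx
      obtain ⟨hx1, hx2⟩ := hx
      obtain ⟨hxa, hmem1⟩ := hmem_smul.mp hx1
      obtain ⟨hxa2, hmem2⟩ := hmemBF.mp hx2
      rw [Set.disjoint_left] at hdisj
      exact hdisj hmem1 hmem2
  exact Pcycle htwo hg hc ha hk haBF hBF2 hBFsmall hBFblk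

end Transfer

section Main
variable {Ω : Type*} [Fintype Ω] [DecidableEq Ω]

/-- weak Jordan for a cycle: 2-transitivity -/
lemma two_of_cycle {G : Subgroup (Perm Ω)}
    (htr : ∀ x y : Ω, ∃ σ ∈ G, σ x = y)
    (hbl : ∀ B : Set Ω, MulAction.IsBlock G B → MulAction.IsTrivialBlock B)
    {g : Perm Ω} (hg : g ∈ G) (hc : g.IsCycle) (hk : 1 ≤ (g.supportᶜ).card) :
    TwoTrans G := by
  apply J2core htr hbl ((g.supportᶜ).card) (g.supportᶜ) rfl hk
  · have h1 := hc.two_le_card_support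
    have h2 := Finset.card_le_univ g.support
    rw [Finset.card_compl]
    omega
  · intro x y hx hy
    rw [Finset.mem_compl, not_not] at hx hy
    obtain ⟨i, hi⟩ := cycle_trans hc hx hy
    refine ⟨g^i, zpow_mem hg i, ?_, hi⟩
    intro c hcmem
    rw [Finset.mem_compl, Equiv.Perm.mem_support, not_not] at hcmem
    exact zpow_apply_eq_self hcmem i

/-- transitivity on 1-tuples -/
lemma one_multiply {α : Type*} (H : Type*) [Group H] [MulAction H α]
    (htr : MulAction.IsPretransitive H α) :
    MulAction.IsPretransitive H (Fin 1 ↪ α) := by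
  constructor
  intro f₁ f₂
  obtain ⟨σ, hσ⟩ := htr.exists_smul_eq (f₁ 0) (f₂ 0)
  refine ⟨σ, ?_⟩
  apply Function.Embedding.ext
  intro i
  have h0 : i = 0 := Subsingleton.elim i 0
  subst h0
  exact hσ

/-- lifting multiple transitivity through the stabilizer restriction -/
lemma lift_trans {G : Subgroup (Perm Ω)} (a : Ω)
    (htr : ∀ x y : Ω, ∃ σ ∈ G, σ x = y) (j : ℕ)
    (hj : MulAction.IsPretransitive (resGrp G a) (Fin j ↪ {x : Ω // x ≠ a})) :
    MulAction.IsPretransitive G (Fin (j+1) ↪ Ω) := by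
  constructor
  intro F₁ F₂
  obtain ⟨σ₁, hσ₁G, hσ₁⟩ := htr (F₁ 0) a
  obtain ⟨σ₂, hσ₂G, hσ₂⟩ := htr (F₂ 0) a
  have hres : ∀ (F : Fin (j+1) ↪ Ω) (σ : Perm Ω), σ (F 0) = a →
      ∀ i : Fin j, σ (F i.succ) ≠ a := by
    intro F σ hσ i hcon
    rw [← hσ] at hcon
    have := σ.injective hcon
    have h2 := F.injective this
    exact absurd h2 (by simp [Fin.ext_iff])
  set f₁ : Fin j ↪ {x : Ω // x ≠ a} :=
    ⟨fun i => ⟨σ₁ (F₁ i.succ), hres F₁ σ₁ hσ₁ i⟩, by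
      intro i₁ i₂ h
      have := congrArg Subtype.val h
      have h2 := F₁.injective (σ₁.injective this)
      exact Fin.succ_injective _ h2⟩ with hf₁
  set f₂ : Fin j ↪ {x : Ω // x ≠ a} :=
    ⟨fun i => ⟨σ₂ (F₂ i.succ), hres F₂ σ₂ hσ₂ i⟩, by
      intro i₁ i₂ h
      have := congrArg Subtype.val h
      have h2 := F₂.injective (σ₂.injective this)
      exact Fin.succ_injective _ h2⟩ with hf₂
  obtain ⟨⟨π, hπmem⟩, hπ⟩ := hj.exists_smul_eq f₁ f₂
  obtain ⟨τ, hτ, rfl⟩ := (resGrp_mem_iff G a).mp hπmem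
  obtain ⟨hτG, hτa⟩ := hτ
  refine ⟨⟨σ₂⁻¹ * τ * σ₁, mul_mem (mul_mem (inv_mem hσ₂G) hτG) hσ₁G⟩, ?_⟩
  apply Function.Embedding.ext
  intro i
  have happ : ∀ (F : Fin (j+1) ↪ Ω) (σ : G) (i : Fin (j+1)),
      ((σ • F) i) = (σ : Perm Ω) (F i) := fun _ _ _ => rfl
  rw [happ]
  induction i using Fin.cases with
  | zero =>
      simp only [Equiv.Perm.mul_apply]
      rw [hσ₁, hτa, ← hσ₂]
      simp
  | succ i =>
      simp only [Equiv.Perm.mul_apply]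
      have hstep := congrFun (congrArg (fun (f : Fin j ↪ {x : Ω // x ≠ a}) => (f : Fin j → {x : Ω // x ≠ a})) hπ) i
      have hv : τ (σ₁ (F₁ i.succ)) = σ₂ (F₂ i.succ) := by
        have := congrArg Subtype.val hstep
        exact this
      rw [hv]
      simp

end Main

universe u

theorem jordan_main (k : ℕ) :
    ∀ (Ω : Type u) [Fintype Ω] [DecidableEq Ω] (G : Subgroup (Equiv.Perm Ω)),
      _root_.IsPreprimitive G Ω → ∀ g : Equiv.Perm Ω, g ∈ G → g.IsCycle →
      g.supportᶜ.card = k → _root_.IsMultiplyPretransitive G Ω (k + 1) := by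
  induction k with
  | zero =>
      intro Ω _ _ G hG g hg hc hfix
      exact one_multiply (↥G) hG.1
  | succ k' IH =>
      intro Ω _ _ G hG g hg hc hfix
      have htr : ∀ x y : Ω, ∃ σ ∈ G, σ x = y := by
        intro x y
        obtain ⟨σ, hσ⟩ := hG.1.exists_smul_eq x y
        exact ⟨σ.1, σ.2, hσ⟩
      have hk1 : 1 ≤ (g.supportᶜ).card := by omega
      have htwo : TwoTrans G := two_of_cycle htr hG.2 hg hc hk1
      obtain ⟨a, haa⟩ : (g.supportᶜ).Nonempty := Finset.card_pos.mp (by omega)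
      have ha : g a = a := by
        rw [Finset.mem_compl, Equiv.Perm.mem_support, not_not] at haa
        exact haa
      have hGtr' : MulAction.IsPretransitive (resGrp G a) {x : Ω // x ≠ a} :=
        res_pretransitive htwo
      have hjres : MulAction.IsPretransitive (resGrp G a) (Fin (k'+1) ↪ {x : Ω // x ≠ a}) := by
        rcases Nat.eq_zero_or_pos k' with hk0 | hkpos
        · subst hk0
          exact one_multiply _ hGtr'
        · have hk2 : 2 ≤ (g.supportᶜ).card := by omega
          have hG' : _root_.IsPreprimitive (resGrp G a) {x : Ω // x ≠ a} :=
            ⟨hGtr', res_trivial_blocks htwo hg hc ha hk2⟩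
          have hcyc' := res_cycle hg hc ha
          have hfix' := res_fix_card hg ha hfix
          have : k' + 1 - 1 = k' := by omega
          rw [this] at hfix'
          exact IH {x : Ω // x ≠ a} (resGrp G a) hG' _ (resGrp_mem G a ⟨hg, ha⟩) hcyc' hfix'
      exact lift_trans a htr (k'+1) hjres

/-- **Jordan (often attributed to Marggraff).** A primitive permutation group of finite degree
containing a cycle fixing exactly `k` points is `(k+1)`-transitive. -/
theorem jordan_marggraff (Ω : Type*) [Fintype Ω] [DecidableEq Ω]
    (G : Subgroup (Equiv.Perm Ω)) (hG : _root_.IsPreprimitive G Ω)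
    (k : ℕ) (g : Equiv.Perm Ω) (hg : g ∈ G) (hc : g.IsCycle)
    (hfix : g.supportᶜ.card = k) :
    _root_.IsMultiplyPretransitive G Ω (k + 1) := by
  exact jordan_main k Ω G hG g hg hc hfix
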